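/- Let H : ℝ → B(E) be continuous with values in self-adjoint operators, and let G : ℝ → B(E) be differentiable satisfying G'(t) = iH(t)G(t) with G(0) = 1 (the time-ordered exponential). Then each G(t) is an isometry on its range; in particular ‖G(t)y‖ = ‖y‖ for all y ∈ E. -/

import Mathlib

open ComplexConjugate in
/-- If `G'(t) = iH(t)G(t)`, `G(0) = 1`, with each `H(t)` self-adjoint, then each
`G(t)` is an isometry: `‖G(t)y‖ = ‖y‖`. -/
theorem time_ordered_exponential_isometric
    (E : Type*) [NormedAddCommGroup E] [InnerProductSpace ℂ E] [CompleteSpace E]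
    (H : ℝ → (E →L[ℂ] E)) (hcont : Continuous H)
    (hsa : ∀ t : ℝ, IsSelfAdjoint (H t))
    (G : ℝ → (E →L[ℂ] E))
    (hG : ∀ t : ℝ, HasDerivAt G (Complex.I • (H t * G t)) t)
    (hG0 : G 0 = 1) :
    ∀ (t : ℝ) (y : E), ‖G t y‖ = ‖y‖ := by
  intro t y
  set f : ℝ → ℂ := fun s => inner ℂ (G s y) (G s y) with hf
  have hder : ∀ s : ℝ, HasDerivAt f 0 s := by
    intro s
    have h1 : HasDerivAt (fun s => G s y) ((Complex.I • (H s * G s)) y) s :=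
      ((ContinuousLinearMap.apply ℂ E y).restrictScalars ℝ).hasFDerivAt.comp_hasDerivAt s (hG s)
    have h2 := h1.inner ℂ h1
    have key : (inner ℂ (G s y) ((Complex.I • (H s * G s)) y) : ℂ)
        + inner ℂ ((Complex.I • (H s * G s)) y) (G s y) = 0 := by
      simp only [ContinuousLinearMap.smul_apply, ContinuousLinearMap.mul_apply,
        inner_smul_left, inner_smul_right, Complex.conj_I]
      have h3 := (hsa s).isSymmetric ((G s) y) ((G s) y)
      simp only [ContinuousLinearMap.coe_coe] at h3
      rw [h3]; ring
    rwa [key] at h2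
  have hconst : f t = f 0 := by
    have : ∀ s : ℝ, f s = f 0 := fun s =>
      is_const_of_deriv_eq_zero (fun x => (hder x).differentiableAt)
        (fun x => (hder x).deriv) s 0
    exact this t
  have : (inner ℂ (G t y) (G t y) : ℂ) = inner ℂ y y := by
    simpa [hf, hG0] using hconst
  rw [inner_self_eq_norm_sq_to_K, inner_self_eq_norm_sq_to_K] at this
  have hr : ‖G t y‖ ^ 2 = ‖y‖ ^ 2 := by exact_mod_cast this
  exact (sq_eq_sq₀ (norm_nonneg _) (norm_nonneg _)).mp hr
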